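/- Let G be a connected multigraph on {0} ∪ A ∪ B with root 0 whose set of G-parking functions is invariant under S_p × S_q, where |A| = p, |B| = q. Then any two non-cut vertices of G lying both in A (or both in B) have the same degree in G (degrees counted with edge weights). -/

import Mathlib

/-- For a rooted multigraph on `Option ι` (root `none`) encoded by a symmetric
weight function `wt`, `dU' wt U i` is the total weight of edges from the
nonroot vertex `i` to vertices outside `U`. -/
def dU' {ι : Type} [Fintype ι] [DecidableEq ι]
    (wt : Option ι → Option ι → ℕ) (U : Finset ι) (i : ι) : ℕ :=
  ∑ j ∈ (U.image Option.some)ᶜ, wt (some i) j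

/-- `b` is a `G`-parking function for the rooted multigraph encoded by `wt`. -/
def IsGPF' {ι : Type} [Fintype ι] [DecidableEq ι]
    (wt : Option ι → Option ι → ℕ) (b : ι → ℕ) : Prop :=
  ∀ U : Finset ι, U.Nonempty → ∃ i ∈ U, b i < dU' wt U i

/-- `b` is a maximal `G`-parking function. -/
def IsMaxGPF' {ι : Type} [Fintype ι] [DecidableEq ι]
    (wt : Option ι → Option ι → ℕ) (b : ι → ℕ) : Prop :=
  IsGPF' wt b ∧ ∀ c : ι → ℕ, IsGPF' wt c → b ≤ c → c = b

/-- Weighted degree of a vertex. -/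
def degW {ι : Type} [Fintype ι] (wt : Option ι → Option ι → ℕ) (x : Option ι) : ℕ :=
  ∑ y, wt x y

/-- `v` is a cut vertex: deleting it disconnects the graph. -/
def IsCutVx {ι : Type} (wt : Option ι → Option ι → ℕ) (v : Option ι) : Prop :=
  ¬ ((SimpleGraph.fromRel fun x y : Option ι => wt x y ≠ 0).induce
      {u : Option ι | u ≠ v}).Connected

lemma gpf_lt_degW {ι : Type} [Fintype ι] [DecidableEq ι]
    (wt : Option ι → Option ι → ℕ) (hloop : ∀ x, wt x x = 0)
    {b : ι → ℕ} (hb : IsGPF' wt b) (i : ι) : b i < degW wt (some i) := by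
  obtain ⟨j, hj, hlt⟩ := hb {i} ⟨i, Finset.mem_singleton_self i⟩
  rw [Finset.mem_singleton] at hj
  subst hj
  refine lt_of_lt_of_le hlt (le_of_eq ?_)
  unfold dU' degW
  rw [Finset.image_singleton, Finset.compl_singleton]
  exact Finset.sum_erase _ (hloop _)

lemma exists_rank {ι : Type} [Fintype ι] [DecidableEq ι]
    (wt : Option ι → Option ι → ℕ) (hsymm : ∀ x y, wt x y = wt y x)
    (hconn : (SimpleGraph.fromRel fun x y : Option ι => wt x y ≠ 0).Connected)
    (i : ι) (hcut : ¬ IsCutVx wt (some i)) :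
    ∃ L : Option ι → ℕ,
      (∀ x : Option ι, x ≠ none → ∃ y, wt x y ≠ 0 ∧ L y < L x) ∧
      (∀ y, y ≠ some i → L y < L (some i)) := by
  classical
  set H := SimpleGraph.fromRel fun x y : Option ι => wt x y ≠ 0 with hH
  have hc' : (H.induce {u : Option ι | u ≠ some i}).Connected := not_not.mp hcut
  have hr : (none : Option ι) ∈ {u : Option ι | u ≠ some i} := by simp
  let r : ↥{u : Option ι | u ≠ some i} := ⟨none, hr⟩
  let L₀ : Option ι → ℕ := fun x =>
    if h : x = some i then 0 else (H.induce {u : Option ι | u ≠ some i}).dist r ⟨x, h⟩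
  let L : Option ι → ℕ := fun x => if x = some i then (Finset.univ.sup L₀) + 1 else L₀ x
  have hLlt : ∀ y, y ≠ some i → L y < L (some i) := by
    intro y hy
    have : L y = L₀ y := by simp [L, hy]
    rw [this]
    have : L (some i) = (Finset.univ.sup L₀) + 1 := by simp [L]
    rw [this]
    exact Nat.lt_succ_of_le (Finset.le_sup (Finset.mem_univ y))
  refine ⟨L, ?_, hLlt⟩
  intro x hx
  by_cases hxi : x = some i
  · -- find a neighbor of some i in H
    obtain ⟨w⟩ := hconn.preconnected x none
    obtain ⟨u, h, w', rfl⟩ := SimpleGraph.Walk.exists_eq_cons_of_ne (by rw [hxi]; simp) w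
    rw [hH, SimpleGraph.fromRel_adj] at h
    obtain ⟨hne, hwt⟩ := h
    subst hxi
    refine ⟨u, ?_, hLlt u (Ne.symm hne)⟩
    rcases hwt with h | h
    · exact h
    · rw [hsymm]; exact h
  · -- x is in the induced graph
    have hax : x ∈ {u : Option ι | u ≠ some i} := hxi
    set a : ↥{u : Option ι | u ≠ some i} := ⟨x, hax⟩ with ha
    have har : a ≠ r := by
      intro h
      apply hx
      have := congrArg Subtype.val h
      exact this
    have hpos : 0 < (H.induce {u : Option ι | u ≠ some i}).dist a r :=
      hc'.pos_dist_of_ne har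
    obtain ⟨w, hw⟩ := hc'.exists_walk_length_eq_dist a r
    obtain ⟨u, hadj, w', rfl⟩ := SimpleGraph.Walk.exists_eq_cons_of_ne har w
    · have hadj' : H.Adj x u.val := hadj
      rw [hH, SimpleGraph.fromRel_adj] at hadj'
      obtain ⟨hne, hwt⟩ := hadj'
      have hui : u.val ≠ some i := u.prop
      refine ⟨u.val, ?_, ?_⟩
      · rcases hwt with h | h
        · exact h
        · rw [hsymm]; exact h
      · have hLu : L u.val = (H.induce {u : Option ι | u ≠ some i}).dist r u := by
          simp only [L, L₀, if_neg hui, dif_neg hui]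
        have hLx : L x = (H.induce {u : Option ι | u ≠ some i}).dist r a := by
          simp only [L, L₀, if_neg hxi, dif_neg hxi]
          rfl
        rw [hLu, hLx]
        rw [SimpleGraph.Walk.length_cons] at hw
        calc (H.induce {u : Option ι | u ≠ some i}).dist r u
            = (H.induce {u : Option ι | u ≠ some i}).dist u r := SimpleGraph.dist_comm
          _ ≤ w'.length := SimpleGraph.dist_le w'
          _ < w'.length + 1 := Nat.lt_succ_self _
          _ = (H.induce {u : Option ι | u ≠ some i}).dist a r := hw
          _ = (H.induce {u : Option ι | u ≠ some i}).dist r a := SimpleGraph.dist_comm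

lemma exists_gpf_top {ι : Type} [Fintype ι] [DecidableEq ι]
    (wt : Option ι → Option ι → ℕ) (hsymm : ∀ x y, wt x y = wt y x)
    (hloop : ∀ x, wt x x = 0)
    (hconn : (SimpleGraph.fromRel fun x y : Option ι => wt x y ≠ 0).Connected)
    (i : ι) (hcut : ¬ IsCutVx wt (some i)) :
    ∃ b : ι → ℕ, IsGPF' wt b ∧ b i + 1 = degW wt (some i) := by
  classical
  obtain ⟨L, hL1, hL2⟩ := exists_rank wt hsymm hconn i hcut
  set b : ι → ℕ := fun v =>
    (∑ y ∈ Finset.univ.filter (fun y => L y < L (some v)), wt (some v) y) - 1 with hb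
  have hsum_pos : ∀ v : ι,
      1 ≤ ∑ y ∈ Finset.univ.filter (fun y => L y < L (some v)), wt (some v) y := by
    intro v
    obtain ⟨y, hy, hLy⟩ := hL1 (some v) (Option.some_ne_none v)
    calc 1 ≤ wt (some v) y := Nat.one_le_iff_ne_zero.mpr hy
      _ ≤ _ := Finset.single_le_sum (fun _ _ => Nat.zero_le _)
            (Finset.mem_filter.mpr ⟨Finset.mem_univ y, hLy⟩)
  refine ⟨b, ?_, ?_⟩
  · intro U hU
    obtain ⟨v, hv, hmin⟩ := Finset.exists_min_image U (fun v => L (some v)) hU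
    refine ⟨v, hv, ?_⟩
    have hsub : Finset.univ.filter (fun y => L y < L (some v)) ⊆ (U.image Option.some)ᶜ := by
      intro y hy
      rw [Finset.mem_filter] at hy
      rw [Finset.mem_compl]
      intro hmem
      obtain ⟨u, hu, rfl⟩ := Finset.mem_image.mp hmem
      exact absurd hy.2 (not_lt.mpr (hmin u hu))
    have hle : (∑ y ∈ Finset.univ.filter (fun y => L y < L (some v)), wt (some v) y)
        ≤ dU' wt U v := Finset.sum_le_sum_of_subset hsub
    calc b v < ∑ y ∈ Finset.univ.filter (fun y => L y < L (some v)), wt (some v) y :=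
          Nat.sub_lt (hsum_pos v) one_pos
      _ ≤ dU' wt U v := hle
  · have hfilter : Finset.univ.filter (fun y => L y < L (some i))
        = Finset.univ.erase (some i) := by
      ext y
      simp only [Finset.mem_filter, Finset.mem_univ, true_and, Finset.mem_erase, and_true]
      constructor
      · intro h hc; rw [hc] at h; exact lt_irrefl _ h
      · exact hL2 y
    have hsum : (∑ y ∈ Finset.univ.filter (fun y => L y < L (some i)), wt (some i) y)
        = degW wt (some i) := by
      rw [hfilter]
      exact Finset.sum_erase _ (hloop _)
    have := hsum_pos i
    rw [hsum] at this
    rw [hb]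
    simp only [← hsum]
    omega

/-- If the `G`-parking functions of a connected rooted multigraph on
`{0} ∪ A ∪ B` are `S_p × S_q`-invariant, then any two non-cut vertices lying
both in `A`, or both in `B`, have the same weighted degree. -/
theorem nonCut_vertices_equal_degrees (p q : ℕ)
    (wt : Option (Fin p ⊕ Fin q) → Option (Fin p ⊕ Fin q) → ℕ)
    (hsymm : ∀ x y, wt x y = wt y x) (hloop : ∀ x, wt x x = 0)
    (hconn : (SimpleGraph.fromRel
        fun x y : Option (Fin p ⊕ Fin q) => wt x y ≠ 0).Connected)
    (hinv : ∀ (b : Fin p ⊕ Fin q → ℕ) (σ : Equiv.Perm (Fin p)) (τ : Equiv.Perm (Fin q)),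
        IsGPF' wt b → IsGPF' wt (b ∘ Sum.map ⇑σ ⇑τ)) :
    (∀ i i' : Fin p, ¬ IsCutVx wt (some (Sum.inl i)) → ¬ IsCutVx wt (some (Sum.inl i')) →
        degW wt (some (Sum.inl i)) = degW wt (some (Sum.inl i'))) ∧
    (∀ j j' : Fin q, ¬ IsCutVx wt (some (Sum.inr j)) → ¬ IsCutVx wt (some (Sum.inr j')) →
        degW wt (some (Sum.inr j)) = degW wt (some (Sum.inr j'))) := by
  have keyL : ∀ i i' : Fin p, ¬ IsCutVx wt (some (Sum.inl i)) →
      degW wt (some (Sum.inl i)) ≤ degW wt (some (Sum.inl i')) := by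
    intro i i' hci
    obtain ⟨b, hb, hbi⟩ := exists_gpf_top wt hsymm hloop hconn (Sum.inl i) hci
    have hc := hinv b (Equiv.swap i i') 1 hb
    have hlt := gpf_lt_degW wt hloop hc (Sum.inl i')
    simp only [Function.comp_apply, Sum.map_inl, Equiv.swap_apply_right] at hlt
    omega
  have keyR : ∀ j j' : Fin q, ¬ IsCutVx wt (some (Sum.inr j)) →
      degW wt (some (Sum.inr j)) ≤ degW wt (some (Sum.inr j')) := by
    intro j j' hcj
    obtain ⟨b, hb, hbj⟩ := exists_gpf_top wt hsymm hloop hconn (Sum.inr j) hcj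
    have hc := hinv b 1 (Equiv.swap j j') hb
    have hlt := gpf_lt_degW wt hloop hc (Sum.inr j')
    simp only [Function.comp_apply, Sum.map_inr, Equiv.swap_apply_right] at hlt
    omega
  exact ⟨fun i i' hi hi' => le_antisymm (keyL i i' hi) (keyL i' i hi'),
    fun j j' hj hj' => le_antisymm (keyR j j' hj) (keyR j' j hj')⟩
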